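/- arXiv:2605.26909 — 5 statements merged into one kernel-verified Lean document; each statement's English description precedes it below -/
import Mathlib

section
/- Let M ⊆ E be a smooth embedded submanifold and let g: E → ℝ be locally Lipschitz continuous on an open superset of M. Then for every x̄ ∈ M and every w_M ∈ ∂_M g(x̄) there exists an element w ∈ ∂g(x̄) of the limiting subdifferential such that w_M = proj_{T_x̄M}(w). In particular, the set-valued map x ↦ ∂_M g(x) is locally bounded on M. -/
open Set Filter Topology

noncomputable section

variable {E : Type*} [NormedAddCommGroup E] [InnerProductSpace ℝ E] [FiniteDimensional ℝ E]

open Classical in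
/-- The indicator function of a set `M` (`0` on `M`, `+∞` elsewhere), with values in `EReal`. -/
def indicatorFun (M : Set E) (x : E) : EReal := if x ∈ M then 0 else ⊤

/-- The Fréchet (regular) subdifferential of an extended-real-valued function `g` at `x`. -/
def frechetSubdiff (g : E → EReal) (x : E) : Set E :=
  {v | ∀ ε : ℝ, 0 < ε →
    ∀ᶠ y in 𝓝 x, g x + (((inner ℝ v (y - x) : ℝ) - ε * ‖y - x‖ : ℝ) : EReal) ≤ g y}

/-- The limiting (Mordukhovich) subdifferential of `g` at `x`. -/
def limitingSubdiff (g : E → EReal) (x : E) : Set E :=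
  {v | ∃ xs vs : ℕ → E,
    Tendsto xs atTop (𝓝 x) ∧
    Tendsto (fun n => g (xs n)) atTop (𝓝 (g x)) ∧
    (∀ n, vs n ∈ frechetSubdiff g (xs n)) ∧
    Tendsto vs atTop (𝓝 v)}

/-- The projectional limiting subdifferential of `g` at `x` relative to `M`:
the orthogonal projection onto the tangent space `T x` of the limiting
subdifferential of `g + δ_M` at `x`. -/
def projSubdiff (g : E → ℝ) (M : Set E) (T : E → Submodule ℝ E) (x : E) : Set E :=
  (fun v => ((Submodule.orthogonalProjectionOnto (T x) v : T x) : E)) ''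
    limitingSubdiff (fun y => (g y : EReal) + indicatorFun M y) x

/-- `M ⊆ E` is a smooth embedded submanifold with tangent spaces `T x`: around each
point of `M` there is a `C¹` local defining function with surjective derivative at
that point, and on `M` the tangent space is the kernel of the derivative. -/
def IsSubmanifold (M : Set E) (T : E → Submodule ℝ E) : Prop :=
  ∀ x ∈ M, ∃ (m : ℕ) (U : Set E) (F : E → (Fin m → ℝ)),
    IsOpen U ∧ x ∈ U ∧ ContDiffOn ℝ 1 F U ∧
    Function.Surjective ⇑(fderiv ℝ F x) ∧
    M ∩ U = {y ∈ U | F y = 0} ∧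
    ∀ y ∈ M ∩ U, T y = LinearMap.ker (fderiv ℝ F y : E →ₗ[ℝ] (Fin m → ℝ))

/-- `g` is locally Lipschitz continuous on `O`. -/
def LocLipschitzOn (g : E → ℝ) (O : Set E) : Prop :=
  ∀ x ∈ O, ∃ s ∈ 𝓝 x, ∃ K : NNReal, LipschitzOnWith K g s

local notation "⟪" x ", " y "⟫" => @inner ℝ _ _ x y

lemma fM_eq_of_mem {M : Set E} (g : E → ℝ) {y : E} (hy : y ∈ M) :
    (g y : EReal) + indicatorFun M y = (g y : EReal) := by
  simp [indicatorFun, hy]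

lemma fM_eq_of_not_mem {M : Set E} (g : E → ℝ) {y : E} (hy : y ∉ M) :
    (g y : EReal) + indicatorFun M y = ⊤ := by
  simp only [indicatorFun, if_neg hy]
  exact EReal.add_top_of_ne_bot (EReal.coe_ne_bot _)

lemma fs_coe_iff (g : E → ℝ) (x v : E) :
    v ∈ frechetSubdiff (fun y => (g y : EReal)) x ↔
      ∀ ε : ℝ, 0 < ε → ∀ᶠ y in 𝓝 x, g x + (⟪v, y - x⟫ - ε * ‖y - x‖) ≤ g y := by
  constructor <;> intro h ε hε <;> filter_upwards [h ε hε] with y hy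
  · rwa [← EReal.coe_add, EReal.coe_le_coe_iff] at hy
  · rwa [← EReal.coe_add, EReal.coe_le_coe_iff]

lemma fs_fM_extract {M : Set E} {g : E → ℝ} {x v : E} (hx : x ∈ M)
    (hv : v ∈ frechetSubdiff (fun y => (g y : EReal) + indicatorFun M y) x)
    {ε : ℝ} (hε : 0 < ε) :
    ∃ δ > 0, ∀ y ∈ M, dist y x < δ → g x + (⟪v, y - x⟫ - ε * ‖y - x‖) ≤ g y := by
  have h := hv ε hε
  rw [Metric.eventually_nhds_iff] at h
  obtain ⟨δ, hδ, h⟩ := h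
  refine ⟨δ, hδ, fun y hyM hyd => ?_⟩
  simpa only [fM_eq_of_mem g hx, fM_eq_of_mem g hyM, ← EReal.coe_add,
    EReal.coe_le_coe_iff] using h hyd

lemma fs_norm_le {g : E → ℝ} {K : NNReal} {t : Set E} {x w : E}
    (ht : t ∈ 𝓝 x) (hK : LipschitzOnWith K g t)
    (hw : w ∈ frechetSubdiff (fun y => (g y : EReal)) x) : ‖w‖ ≤ K := by
  rw [fs_coe_iff] at hw
  by_contra hcon
  push_neg at hcon
  have hwpos : 0 < ‖w‖ := lt_of_le_of_lt K.coe_nonneg hcon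
  set ε : ℝ := (‖w‖ - K) / 2 with hεdef
  have hε : 0 < ε := div_pos (by linarith) two_pos
  have h := (hw ε hε).and (eventually_mem_nhds_iff.mpr ht)
  rw [Metric.eventually_nhds_iff] at h
  obtain ⟨δ, hδ, h⟩ := h
  set τ : ℝ := δ / (2 * ‖w‖) with hτdef
  have hτ : 0 < τ := div_pos hδ (by linarith)
  set y := x + τ • w with hy
  have hyx : y - x = τ • w := by rw [hy]; abel
  have hnyx : ‖y - x‖ = τ * ‖w‖ := by
    rw [hyx, norm_smul, Real.norm_eq_abs, abs_of_pos hτ]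
  have hτw : τ * ‖w‖ = δ / 2 := by
    rw [hτdef, div_mul_eq_mul_div, div_eq_div_iff (by positivity) two_ne_zero]
    ring
  have hdy : dist y x < δ := by
    rw [dist_eq_norm, hnyx, hτw]; linarith
  obtain ⟨hineq, hyt⟩ := h hdy
  have hyt' : y ∈ t := mem_of_mem_nhds hyt
  have hxt : x ∈ t := mem_of_mem_nhds ht
  have hinner : ⟪w, y - x⟫ = τ * (‖w‖ * ‖w‖) := by
    rw [hyx, real_inner_smul_right, real_inner_self_eq_norm_mul_norm]
  have hlipb : g y - g x ≤ (K : ℝ) * (τ * ‖w‖) := by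
    have := hK.dist_le_mul y hyt' x hxt
    rw [Real.dist_eq, dist_eq_norm, hnyx] at this
    exact (le_abs_self _).trans this
  rw [hinner, hnyx] at hineq
  have hτw0 : 0 < τ * ‖w‖ := by positivity
  nlinarith [hineq, hlipb, hτw0, hwpos]

lemma limiting_norm_le {g : E → ℝ} {K : NNReal} {V : Set E} {x w : E}
    (hV : IsOpen V) (hx : x ∈ V) (hK : LipschitzOnWith K g V)
    (hw : w ∈ limitingSubdiff (fun y => (g y : EReal)) x) : ‖w‖ ≤ K := by
  obtain ⟨xs, vs, hxs, -, hfs, hvs⟩ := hw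
  have hev : ∀ᶠ n in atTop, xs n ∈ V := hxs.eventually_mem (hV.mem_nhds hx)
  have hnorm : ∀ᶠ n in atTop, ‖vs n‖ ≤ (K : ℝ) := by
    filter_upwards [hev] with n hn
    exact fs_norm_le (hV.mem_nhds hn) hK (hfs n)
  exact le_of_tendsto hvs.norm hnorm

lemma fs_of_min {g : E → ℝ} {v p y₀ : E} {c ρ : ℝ} (hc : 0 < c) (hρ : 0 < ρ)
    (hmin : ∀ y ∈ Metric.ball y₀ ρ,
      g y₀ - ⟪v, y₀⟫ + c * ‖y₀ - p‖ ^ 2 ≤ g y - ⟪v, y⟫ + c * ‖y - p‖ ^ 2) :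
    v - (2 * c) • (y₀ - p) ∈ frechetSubdiff (fun y => (g y : EReal)) y₀ := by
  rw [fs_coe_iff]
  intro ε hε
  rw [Metric.eventually_nhds_iff]
  refine ⟨min ρ (ε / c), lt_min hρ (by positivity), fun y hy => ?_⟩
  rw [dist_eq_norm] at hy
  have h1 : y ∈ Metric.ball y₀ ρ := by
    rw [Metric.mem_ball, dist_eq_norm]; exact hy.trans_le (min_le_left _ _)
  have h2 : ‖y - y₀‖ ≤ ε / c := le_of_lt (hy.trans_le (min_le_right _ _))
  have key := hmin y h1
  have hexp : c * ‖y - p‖ ^ 2 =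
      c * ‖y - y₀‖ ^ 2 + 2 * (c * ⟪y - y₀, y₀ - p⟫) + c * ‖y₀ - p‖ ^ 2 := by
    have h3 : y - p = (y - y₀) + (y₀ - p) := by abel
    rw [h3, norm_add_sq_real]; ring
  have hvsub : ⟪v, y - y₀⟫ = ⟪v, y⟫ - ⟪v, y₀⟫ := inner_sub_right v y y₀
  have hinner : ⟪v - (2 * c) • (y₀ - p), y - y₀⟫ =
      ⟪v, y - y₀⟫ - 2 * (c * ⟪y - y₀, y₀ - p⟫) := by
    rw [inner_sub_left, real_inner_smul_left, real_inner_comm (y₀ - p)]; ring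
  have hsq : c * ‖y - y₀‖ ^ 2 ≤ ε * ‖y - y₀‖ := by
    have hnn : (0:ℝ) ≤ ‖y - y₀‖ := norm_nonneg _
    have : c * ‖y - y₀‖ ≤ ε := by
      rw [← le_div_iff₀' hc]; exact h2
    nlinarith
  rw [hinner]
  linarith [key, hexp, hvsub, hsq]

lemma normal_of_min {M : Set E} {y p₀ x : E} {c μ ρ : ℝ} (hc : 0 < c) (hμ : 0 < μ)
    (hρ : 0 < ρ)
    (hmin : ∀ q ∈ M, ‖q - p₀‖ < ρ →
      c * ‖y - p₀‖ ^ 2 + μ * ‖p₀ - x‖ ^ 2 ≤ c * ‖y - q‖ ^ 2 + μ * ‖q - x‖ ^ 2) :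
    ∀ ε > (0:ℝ), ∃ δ > (0:ℝ), ∀ q ∈ M, ‖q - p₀‖ < δ →
      ⟪(2 * c) • (y - p₀) - (2 * μ) • (p₀ - x), q - p₀⟫ ≤ ε * ‖q - p₀‖ := by
  intro ε hε
  refine ⟨min ρ (ε / (c + μ)), lt_min hρ (by positivity), fun q hqM hq => ?_⟩
  have key := hmin q hqM (hq.trans_le (min_le_left _ _))
  have h2 : ‖q - p₀‖ ≤ ε / (c + μ) := le_of_lt (hq.trans_le (min_le_right _ _))
  have hA : c * ‖y - q‖ ^ 2 =
      c * ‖y - p₀‖ ^ 2 - 2 * (c * ⟪q - p₀, y - p₀⟫) + c * ‖q - p₀‖ ^ 2 := by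
    have h3 : y - q = (y - p₀) - (q - p₀) := by abel
    rw [h3, norm_sub_sq_real, real_inner_comm]; ring
  have hB : μ * ‖q - x‖ ^ 2 =
      μ * ‖p₀ - x‖ ^ 2 + 2 * (μ * ⟪q - p₀, p₀ - x⟫) + μ * ‖q - p₀‖ ^ 2 := by
    have h3 : q - x = (q - p₀) + (p₀ - x) := by abel
    rw [h3, norm_add_sq_real]; ring
  have hinner : ⟪(2 * c) • (y - p₀) - (2 * μ) • (p₀ - x), q - p₀⟫ =
      2 * (c * ⟪q - p₀, y - p₀⟫) - 2 * (μ * ⟪q - p₀, p₀ - x⟫) := by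
    rw [inner_sub_left, real_inner_smul_left, real_inner_smul_left,
      real_inner_comm (y - p₀), real_inner_comm (p₀ - x)]; ring
  have hsq : c * ‖q - p₀‖ ^ 2 + μ * ‖q - p₀‖ ^ 2 ≤ ε * ‖q - p₀‖ := by
    have hnn : (0:ℝ) ≤ ‖q - p₀‖ := norm_nonneg _
    have h4 : (c + μ) * ‖q - p₀‖ ≤ ε := by
      rw [← le_div_iff₀' (by positivity)]; exact h2
    nlinarith
  rw [hinner]
  linarith [key, hA, hB, hsq]

lemma normal_inner_le {m : ℕ} {M U : Set E} {F : E → (Fin m → ℝ)} (hU : IsOpen U)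
    (hF : ContDiffOn ℝ 1 F U) (hMU : M ∩ U = {y ∈ U | F y = 0})
    {p : E} (hpM : p ∈ M) (hpU : p ∈ U)
    (hsurj : Function.Surjective ⇑(fderiv ℝ F p)) {n : E}
    (hn : ∀ ε > (0:ℝ), ∃ δ > (0:ℝ), ∀ q ∈ M, ‖q - p‖ < δ → ⟪n, q - p⟫ ≤ ε * ‖q - p‖)
    {t : E} (ht : t ∈ LinearMap.ker (fderiv ℝ F p : E →ₗ[ℝ] (Fin m → ℝ))) : ⟪n, t⟫ ≤ 0 := by
  classical
  set f' := fderiv ℝ F p with hf'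
  have hst : HasStrictFDerivAt F f' p :=
    (hF.contDiffAt (hU.mem_nhds hpU)).hasStrictFDerivAt one_ne_zero
  have hrange : f'.range = ⊤ := LinearMap.range_eq_top.mpr hsurj
  have hker : f'.ker.ClosedComplemented :=
    f'.ker_closedComplemented_of_finiteDimensional_range
  set ψ : f'.ker → E :=
    hst.implicitFunctionOfComplemented F f' hrange hker (F p) with hψdef
  have hψ0 : ψ 0 = p := hst.implicitFunctionOfComplemented_apply_image hrange hker
  have hψd : HasStrictFDerivAt ψ f'.ker.subtypeL 0 :=
    hst.to_implicitFunctionOfComplemented hrange hker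
  set t' : f'.ker := ⟨t, ht⟩ with ht'def
  -- the curve
  set γ : ℝ → E := fun s => ψ (s • t') with hγdef
  have hγ0 : γ 0 = p := by simp [hγdef, hψ0]
  have hcurve : HasDerivAt (fun s : ℝ => s • t') t' 0 := by
    simpa using (hasDerivAt_id (0:ℝ)).smul_const t'
  have hγd : HasDerivAt γ t 0 := by
    have hψd' : HasFDerivAt ψ f'.ker.subtypeL ((fun s : ℝ => s • t') 0) := by
      simpa using hψd.hasFDerivAt
    have h := hψd'.comp_hasDerivAt (0:ℝ) hcurve
    simpa [hγdef, Function.comp_def] using h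
  have hslope : Tendsto (slope γ 0) (𝓝[≠] 0) (𝓝 t) := hasDerivAt_iff_tendsto_slope.mp hγd
  have hs0 : Tendsto (fun k : ℕ => 1 / ((k:ℝ) + 1)) atTop (𝓝 0) :=
    tendsto_one_div_add_atTop_nhds_zero_nat
  have hspos : ∀ k : ℕ, (0:ℝ) < 1 / ((k:ℝ) + 1) := fun k => by positivity
  have hseq : Tendsto (fun k : ℕ => 1 / ((k:ℝ) + 1)) atTop (𝓝[≠] 0) :=
    tendsto_nhdsWithin_of_tendsto_nhds_of_eventually_within _ hs0
      (Eventually.of_forall fun k => (hspos k).ne')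
  set q : ℕ → E := fun k => γ (1 / ((k:ℝ) + 1)) with hqdef
  set u : ℕ → E := fun k => slope γ 0 (1 / ((k:ℝ) + 1)) with hudef
  have hu : Tendsto u atTop (𝓝 t) := hslope.comp hseq
  -- q k → p
  have hc0 : Tendsto (fun k : ℕ => (1 / ((k:ℝ) + 1)) • t') atTop (𝓝 0) := by
    simpa using hs0.smul_const t'
  have hq : Tendsto q atTop (𝓝 p) := by
    have := (hψd.continuousAt.tendsto.comp hc0)
    rwa [hψ0] at this
  -- F (q k) = F p eventually
  have hFψ := hst.map_implicitFunctionOfComplemented_eq (f' := f') hrange hker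
  have hFq : ∀ᶠ k in atTop, F (q k) = F p := by
    have hpair : Tendsto (fun k : ℕ => ((F p : Fin m → ℝ), (1 / ((k:ℝ) + 1)) • t'))
        atTop (𝓝 (F p, 0)) := tendsto_const_nhds.prodMk_nhds hc0
    filter_upwards [hpair.eventually hFψ] with k hk
    exact hk
  have hFp : F p = 0 := by
    have : p ∈ M ∩ U := ⟨hpM, hpU⟩
    rw [hMU] at this
    exact this.2
  have hqM : ∀ᶠ k in atTop, q k ∈ M := by
    filter_upwards [hFq, hq.eventually_mem (hU.mem_nhds hpU)] with k h1 h2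
    have : q k ∈ M ∩ U := by
      rw [hMU]
      exact ⟨h2, by rw [h1, hFp]⟩
    exact this.1
  -- slope identity
  have huq : ∀ k : ℕ, u k = ((k:ℝ) + 1) • (q k - p) := by
    intro k
    rw [hudef]
    simp only [slope_def_module, sub_zero, hγ0, hqdef]
    rw [one_div, inv_inv]
  -- for each positive ε, pass to the limit
  have hfinal : ∀ ε > (0:ℝ), ⟪n, t⟫ ≤ ε * ‖t‖ := by
    intro ε hε
    obtain ⟨δ, hδ, hδp⟩ := hn ε hε
    have hev : ∀ᶠ k in atTop, ⟪n, u k⟫ ≤ ε * ‖u k‖ := by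
      have hqδ : ∀ᶠ k in atTop, ‖q k - p‖ < δ := by
        have := hq.eventually_mem (Metric.ball_mem_nhds p hδ)
        filter_upwards [this] with k hk
        rwa [Metric.mem_ball, dist_eq_norm] at hk
      filter_upwards [hqM, hqδ] with k h1 h2
      have hb := hδp (q k) h1 h2
      rw [huq k, real_inner_smul_right, norm_smul]
      have hk1 : (0:ℝ) ≤ (k:ℝ) + 1 := by positivity
      rw [Real.norm_eq_abs, abs_of_nonneg hk1]
      calc ((k:ℝ) + 1) * ⟪n, q k - p⟫ ≤ ((k:ℝ) + 1) * (ε * ‖q k - p‖) :=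
            mul_le_mul_of_nonneg_left hb hk1
        _ = ε * (((k:ℝ) + 1) * ‖q k - p‖) := by ring
    exact le_of_tendsto_of_tendsto (tendsto_const_nhds.inner hu)
      ((hu.norm).const_mul ε) hev
  by_contra hcon
  push_neg at hcon
  have h1 := hfinal (⟪n, t⟫ / (2 * (‖t‖ + 1))) (by positivity)
  have h2 : (0:ℝ) ≤ ‖t‖ := norm_nonneg _
  rw [div_mul_eq_mul_div, le_div_iff₀ (by positivity)] at h1
  nlinarith


private lemma quad_le_aux {P e S : ℝ} (hP : 0 ≤ P) (he : 0 < e) (hS : 0 ≤ S)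
    (h : P ^ 2 ≤ e * P + S ^ 2) : P ≤ e + S := by nlinarith

private lemma sq_le_aux {a A : ℝ} (ha : 0 ≤ a) (hA : 0 ≤ A) (h : a ^ 2 ≤ A ^ 2) :
    a ≤ A := by nlinarith

set_option maxHeartbeats 1000000 in
lemma lemA {M : Set E} {g : E → ℝ} {x v : E} {K : NNReal} {r : ℝ} (hr : 0 < r)
    (hxM : x ∈ M)
    (hlip : LipschitzOnWith K g (Metric.closedBall x r))
    (hcomp : IsCompact (M ∩ Metric.closedBall x r))
    (hv : v ∈ frechetSubdiff (fun y => (g y : EReal) + indicatorFun M y) x)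
    {η : ℝ} (hη : 0 < η) :
    ∃ y₀ w p₀ nv, ‖y₀ - x‖ ≤ η ∧ p₀ ∈ M ∧ ‖p₀ - x‖ ≤ η ∧
      w ∈ frechetSubdiff (fun y => (g y : EReal)) y₀ ∧
      (∀ ε > (0:ℝ), ∃ δ > (0:ℝ), ∀ q ∈ M, ‖q - p₀‖ < δ → ⟪nv, q - p₀⟫ ≤ ε * ‖q - p₀‖) ∧
      ‖v - w - nv‖ ≤ η := by
  obtain ⟨C, hCdef⟩ : ∃ z : ℝ, z = (K : ℝ) + ‖v‖ + 1 := ⟨_, rfl⟩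
  have hC1 : 1 ≤ C := by
    have := K.coe_nonneg
    have := norm_nonneg v
    rw [hCdef]
    have := K.coe_nonneg
    have := norm_nonneg v
    linarith
  have hC0 : 0 < C := lt_of_lt_of_le one_pos hC1
  obtain ⟨ε, hεdef⟩ : ∃ z : ℝ, z = η / 8 := ⟨_, rfl⟩
  have hε : 0 < ε := by rw [hεdef]; positivity
  obtain ⟨r₁, hr₁, hsub⟩ := fs_fM_extract hxM hv hε
  obtain ⟨R, hRdef⟩ : ∃ z : ℝ, z = min r (r₁ / 2) := ⟨_, rfl⟩
  have hR : 0 < R := by rw [hRdef]; exact lt_min hr (by linarith)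
  have hRr : R ≤ r := by rw [hRdef]; exact min_le_left _ _
  have hRr₁ : R < r₁ := by
    rw [hRdef]; exact lt_of_le_of_lt (min_le_right _ _) (by linarith)
  obtain ⟨μ, hμdef⟩ : ∃ z : ℝ, z = max 1 (8 * ε / R) := ⟨_, rfl⟩
  have hμ1 : 1 ≤ μ := by rw [hμdef]; exact le_max_left _ _
  have hμ : 0 < μ := lt_of_lt_of_le one_pos hμ1
  have hεμR : ε / μ ≤ R / 8 := by
    have h8 : 8 * ε / R ≤ μ := by rw [hμdef]; exact le_max_right _ _
    rw [div_le_iff₀ hR] at h8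
    rw [div_le_div_iff₀ hμ (by norm_num)]
    linarith
  obtain ⟨mR, hmRdef⟩ : ∃ z : ℝ, z = min η R := ⟨_, rfl⟩
  have hmR : 0 < mR := by rw [hmRdef]; exact lt_min hη hR
  have hmRη : mR ≤ η := by rw [hmRdef]; exact min_le_left _ _
  have hmRR : mR ≤ R := by rw [hmRdef]; exact min_le_right _ _
  obtain ⟨A₀, hA₀def⟩ : ∃ z : ℝ, z = min (min (η / 8) (R / 8)) (mR ^ 2 / (64 * μ * C)) := ⟨_, rfl⟩
  have hA₀ : 0 < A₀ := by
    rw [hA₀def]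
    exact lt_min (lt_min (by positivity) (div_pos hR (by norm_num)))
      (div_pos (pow_pos hmR 2) (mul_pos (mul_pos (by norm_num) hμ) hC0))
  have hA₀η : A₀ ≤ η / 8 := by
    rw [hA₀def]; exact le_trans (min_le_left _ _) (min_le_left _ _)
  have hA₀R : A₀ ≤ R / 8 := by
    rw [hA₀def]; exact le_trans (min_le_left _ _) (min_le_right _ _)
  have hA₀m : A₀ ≤ mR ^ 2 / (64 * μ * C) := by rw [hA₀def]; exact min_le_right _ _
  obtain ⟨D, hDdef⟩ : ∃ z : ℝ, z = 2 * R * C + ε * R + 1 := ⟨_, rfl⟩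
  have hD : 0 < D := by
    rw [hDdef]
    have t1 := mul_pos (mul_pos (two_pos (α := ℝ)) hR) hC0
    have t2 := mul_pos hε hR
    linarith
  obtain ⟨c, hcdef⟩ : ∃ z : ℝ, z = D / A₀ ^ 2 := ⟨_, rfl⟩
  have hc : 0 < c := by rw [hcdef]; exact div_pos hD (pow_pos hA₀ 2)
  have hcA : c * A₀ ^ 2 = D := by
    rw [hcdef]; exact div_mul_cancel₀ D (pow_ne_zero 2 hA₀.ne')
  -- the penalized function and compact domain
  set Φ : E × E → ℝ := fun yp =>
    g yp.1 - ⟪v, yp.1⟫ + c * ‖yp.1 - yp.2‖ ^ 2 + μ * ‖yp.2 - x‖ ^ 2 with hΦdef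
  set S : Set (E × E) := Metric.closedBall x R ×ˢ (M ∩ Metric.closedBall x R) with hSdef
  have hMReq : M ∩ Metric.closedBall x R =
      (M ∩ Metric.closedBall x r) ∩ Metric.closedBall x R := by
    ext y
    constructor
    · rintro ⟨h1, h2⟩
      exact ⟨⟨h1, Metric.closedBall_subset_closedBall hRr h2⟩, h2⟩
    · rintro ⟨⟨h1, _⟩, h2⟩
      exact ⟨h1, h2⟩
  have hcompR : IsCompact (M ∩ Metric.closedBall x R) := by
    rw [hMReq]
    exact hcomp.inter_right Metric.isClosed_closedBall
  have hScomp : IsCompact S := (isCompact_closedBall x R).prod hcompR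
  have hSne : S.Nonempty :=
    ⟨(x, x), Metric.mem_closedBall_self hR.le, hxM, Metric.mem_closedBall_self hR.le⟩
  have hgc : ContinuousOn g (Metric.closedBall x R) :=
    hlip.continuousOn.mono (Metric.closedBall_subset_closedBall hRr)
  have hΦc : ContinuousOn Φ S := by
    apply ContinuousOn.add
    apply ContinuousOn.add
    apply ContinuousOn.sub
    · exact hgc.comp continuousOn_fst (fun yp hyp => hyp.1)
    · exact (continuous_const.inner continuous_fst).continuousOn
    · exact (continuous_const.mul ((continuous_fst.sub continuous_snd).norm.pow 2)).continuousOn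
    · exact (continuous_const.mul ((continuous_snd.sub continuous_const).norm.pow 2)).continuousOn
  obtain ⟨⟨y₀, p₀⟩, hmem, hminS⟩ := hScomp.exists_isMinOn hSne hΦc
  have hy₀B : y₀ ∈ Metric.closedBall x R := hmem.1
  have hp₀M : p₀ ∈ M := hmem.2.1
  have hp₀B : p₀ ∈ Metric.closedBall x R := hmem.2.2
  have hmin : ∀ yp ∈ S, Φ (y₀, p₀) ≤ Φ yp := fun yp hyp => isMinOn_iff.mp hminS yp hyp
  set a : ℝ := ‖y₀ - p₀‖ with hadef
  set b : ℝ := ‖p₀ - x‖ with hbdef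
  have ha0 : 0 ≤ a := norm_nonneg _
  have hb0 : 0 ≤ b := norm_nonneg _
  have hbR : b ≤ R := by rwa [Metric.mem_closedBall, dist_eq_norm] at hp₀B
  have hy₀R : ‖y₀ - x‖ ≤ R := by rwa [Metric.mem_closedBall, dist_eq_norm] at hy₀B
  have haR : a ≤ 2 * R := by
    have := norm_sub_le_norm_sub_add_norm_sub y₀ x p₀
    have h2 : ‖x - p₀‖ = b := norm_sub_rev x p₀
    simp only [hadef]
    linarith
  -- master inequality
  have hmaster : c * a ^ 2 + μ * b ^ 2 ≤ C * a + ε * b := by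
    have key1 := hmin (x, x)
      ⟨Metric.mem_closedBall_self hR.le, hxM, Metric.mem_closedBall_self hR.le⟩
    have hxx : Φ (x, x) = g x - ⟪v, x⟫ := by
      simp [hΦdef]
    have hΦy : Φ (y₀, p₀) = g y₀ - ⟪v, y₀⟫ + c * a ^ 2 + μ * b ^ 2 := rfl
    rw [hxx, hΦy] at key1
    have key2 : g x + (⟪v, p₀ - x⟫ - ε * ‖p₀ - x‖) ≤ g p₀ := by
      apply hsub p₀ hp₀M
      rw [dist_eq_norm]
      exact lt_of_le_of_lt hbR hRr₁
    have key3 : g p₀ - g y₀ ≤ (K : ℝ) * a := by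
      have h1 := hlip.dist_le_mul p₀
        (Metric.closedBall_subset_closedBall hRr hp₀B)
        y₀ (Metric.closedBall_subset_closedBall hRr hy₀B)
      rw [Real.dist_eq, dist_eq_norm] at h1
      have h2 : ‖p₀ - y₀‖ = a := norm_sub_rev p₀ y₀
      rw [h2] at h1
      exact (le_abs_self _).trans h1
    have key4 : ⟪v, y₀⟫ - ⟪v, p₀⟫ ≤ ‖v‖ * a := by
      have h1 : ⟪v, y₀ - p₀⟫ ≤ ‖v‖ * a := by
        have := real_inner_le_norm v (y₀ - p₀)
        simpa [hadef] using this
      rw [inner_sub_right] at h1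
      exact h1
    have key5 : ⟪v, p₀ - x⟫ = ⟪v, p₀⟫ - ⟪v, x⟫ := inner_sub_right v p₀ x
    simp only [← hbdef] at key2
    have hCa : C * a = (K : ℝ) * a + ‖v‖ * a + a := by rw [hCdef]; ring
    linarith [key1, key2, key3, key4, key5, hCa, ha0]
  -- bound on a
  have haA : a ≤ A₀ := by
    have h1 : c * a ^ 2 ≤ D - 1 := by
      have t1 : C * a ≤ C * (2 * R) := mul_le_mul_of_nonneg_left haR hC0.le
      have t2 : ε * b ≤ ε * R := mul_le_mul_of_nonneg_left hbR hε.le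
      have t3 : 0 ≤ μ * b ^ 2 := mul_nonneg hμ.le (sq_nonneg b)
      linarith [hmaster, t1, t2, t3, hDdef]
    have h2 : c * a ^ 2 ≤ c * A₀ ^ 2 := by rw [hcA]; linarith
    have h3 : a ^ 2 ≤ A₀ ^ 2 := le_of_mul_le_mul_left (by linarith [h2]) hc
    exact sq_le_aux ha0 hA₀.le h3
  -- bound on μ * b
  obtain ⟨S₀, hS₀def⟩ : ∃ z : ℝ, z = Real.sqrt (μ * C * A₀) := ⟨_, rfl⟩
  have hS₀0 : 0 ≤ S₀ := by rw [hS₀def]; exact Real.sqrt_nonneg _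
  have hS₀sq : S₀ ^ 2 = μ * C * A₀ := by
    rw [hS₀def]
    exact Real.sq_sqrt (mul_nonneg (mul_nonneg hμ.le hC0.le) hA₀.le)
  have hS₀le : S₀ ≤ mR / 8 := by
    have h1 : μ * C * A₀ ≤ (mR / 8) ^ 2 := by
      have h2 : μ * C * A₀ ≤ μ * C * (mR ^ 2 / (64 * μ * C)) :=
        mul_le_mul_of_nonneg_left hA₀m (mul_nonneg hμ.le hC0.le)
      have h3 : μ * C * (mR ^ 2 / (64 * μ * C)) = mR ^ 2 / 64 := by
        field_simp [hμ.ne', hC0.ne']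
      rw [h3] at h2
      have h4 : (mR / 8) ^ 2 = mR ^ 2 / 64 := by ring
      linarith
    calc S₀ ≤ Real.sqrt ((mR / 8) ^ 2) := by rw [hS₀def]; exact Real.sqrt_le_sqrt h1
      _ = mR / 8 := Real.sqrt_sq (div_nonneg hmR.le (by norm_num))
  have hP : μ * b ≤ ε + S₀ := by
    have hP2 : (μ * b) ^ 2 ≤ ε * (μ * b) + S₀ ^ 2 := by
      have h1 : μ * C * a ≤ S₀ ^ 2 := by
        rw [hS₀sq]
        exact mul_le_mul_of_nonneg_left haA (mul_nonneg hμ.le hC0.le)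
      have hmul := mul_le_mul_of_nonneg_left hmaster hμ.le
      have hca : 0 ≤ μ * (c * a ^ 2) := mul_nonneg hμ.le (mul_nonneg hc.le (sq_nonneg a))
      linarith [hmul, hca, h1]
    exact quad_le_aux (mul_nonneg hμ.le hb0) hε hS₀0 hP2
  have hbbound : b ≤ ε / μ + S₀ := by
    have h1 : b ≤ (ε + S₀) / μ := by
      rw [le_div_iff₀ hμ]
      calc b * μ = μ * b := mul_comm _ _
        _ ≤ ε + S₀ := hP
    calc b ≤ (ε + S₀) / μ := h1
      _ = ε / μ + S₀ / μ := add_div _ _ _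
      _ ≤ ε / μ + S₀ := by
          have := div_le_self hS₀0 hμ1
          linarith
  have hbη : b ≤ η / 4 := by
    have h1 : b ≤ ε + S₀ := by
      have := div_le_self hε.le hμ1
      linarith [hbbound]
    have h2 : S₀ ≤ η / 8 := hS₀le.trans (by linarith)
    linarith [h1, h2, hεdef]
  have hbRq : b ≤ R / 4 := by
    have h2 : S₀ ≤ R / 8 := hS₀le.trans (by linarith)
    linarith [hbbound, hεμR]
  have hyx : ‖y₀ - x‖ ≤ a + b := by
    have := norm_sub_le_norm_sub_add_norm_sub y₀ p₀ x
    linarith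
  have hyxR : ‖y₀ - x‖ < R := by
    have : a ≤ R / 8 := haA.trans hA₀R
    linarith
  have hyxη : ‖y₀ - x‖ ≤ η := by
    have : a ≤ η / 8 := haA.trans hA₀η
    linarith
  -- Fréchet subgradient at y₀
  set w : E := v - (2 * c) • (y₀ - p₀) with hwdef
  have hwfs : w ∈ frechetSubdiff (fun y => (g y : EReal)) y₀ := by
    apply fs_of_min hc (show (0:ℝ) < R - ‖y₀ - x‖ by linarith)
    intro y hy
    have hyB : y ∈ Metric.closedBall x R := by
      rw [Metric.mem_ball] at hy
      rw [Metric.mem_closedBall]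
      calc dist y x ≤ dist y y₀ + dist y₀ x := dist_triangle _ _ _
        _ ≤ (R - ‖y₀ - x‖) + ‖y₀ - x‖ := by
            rw [dist_eq_norm y₀ x]
            exact add_le_add hy.le le_rfl
        _ = R := by ring
    have := hmin (y, p₀) ⟨hyB, hp₀M, hp₀B⟩
    have hΦy : Φ (y₀, p₀) = g y₀ - ⟪v, y₀⟫ + c * ‖y₀ - p₀‖ ^ 2 + μ * b ^ 2 := rfl
    have hΦy2 : Φ (y, p₀) = g y - ⟪v, y⟫ + c * ‖y - p₀‖ ^ 2 + μ * b ^ 2 := rfl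
    rw [hΦy, hΦy2] at this
    linarith
  -- normal vector at p₀
  set nv : E := (2 * c) • (y₀ - p₀) - (2 * μ) • (p₀ - x) with hnvdef
  have hnv : ∀ ε' > (0:ℝ), ∃ δ > (0:ℝ), ∀ q ∈ M, ‖q - p₀‖ < δ →
      ⟪nv, q - p₀⟫ ≤ ε' * ‖q - p₀‖ := by
    apply normal_of_min hc hμ (show (0:ℝ) < R - b by linarith)
    intro q hqM hq
    have hqB : q ∈ Metric.closedBall x R := by
      rw [Metric.mem_closedBall]
      calc dist q x ≤ dist q p₀ + dist p₀ x := dist_triangle _ _ _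
        _ ≤ (R - b) + b := by
            rw [dist_eq_norm q p₀, dist_eq_norm p₀ x]
            exact add_le_add hq.le le_rfl
        _ = R := by ring
    have := hmin (y₀, q) ⟨hy₀B, hqM, hqB⟩
    have hΦy : Φ (y₀, p₀) = g y₀ - ⟪v, y₀⟫ + c * ‖y₀ - p₀‖ ^ 2 + μ * ‖p₀ - x‖ ^ 2 := rfl
    have hΦy2 : Φ (y₀, q) = g y₀ - ⟪v, y₀⟫ + c * ‖y₀ - q‖ ^ 2 + μ * ‖q - x‖ ^ 2 := rfl
    rw [hΦy, hΦy2] at this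
    linarith
  -- the error
  have herr : ‖v - w - nv‖ ≤ η := by
    have h1 : v - w - nv = (2 * μ) • (p₀ - x) := by
      rw [hwdef, hnvdef]; abel
    rw [h1, norm_smul, Real.norm_eq_abs, abs_of_pos (by linarith : (0:ℝ) < 2 * μ)]
    calc 2 * μ * ‖p₀ - x‖ = 2 * (μ * b) := by rw [hbdef]; ring
      _ ≤ 2 * (ε + S₀) := by linarith [hP]
      _ ≤ η := by
          have h2 : S₀ ≤ η / 8 := hS₀le.trans (by linarith)
          rw [hεdef]; linarith
  exact ⟨y₀, w, p₀, nv, hyxη, hp₀M, by linarith, hwfs, hnv, herr⟩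

set_option maxHeartbeats 1000000 in
lemma part1 {M : Set E} {T : E → Submodule ℝ E} (hM : IsSubmanifold M T)
    {g : E → ℝ} {O : Set E} (hMO : M ⊆ O) (hlip : LocLipschitzOn g O)
    {z : E} (hz : z ∈ M) {v : E}
    (hv : v ∈ limitingSubdiff (fun y => (g y : EReal) + indicatorFun M y) z) :
    ∃ w ∈ limitingSubdiff (fun y => (g y : EReal)) z,
      ((Submodule.orthogonalProjectionOnto (T z) v : T z) : E) =
        ((Submodule.orthogonalProjectionOnto (T z) w : T z) : E) := by
  obtain ⟨m, U, F, hU, hzU, hF, hFsurj, hMU, hT⟩ := hM z hz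
  obtain ⟨s, hs, K, hK⟩ := hlip z (hMO hz)
  -- continuity of the derivative
  have hfd : ContinuousOn (fderiv ℝ F) U := hF.continuousOn_fderiv_of_isOpen hU le_rfl
  -- right inverse of the derivative at z
  obtain ⟨Rl, hRl⟩ := LinearMap.exists_rightInverse_of_surjective
    ((fderiv ℝ F z) : E →ₗ[ℝ] (Fin m → ℝ)) (LinearMap.range_eq_top.mpr hFsurj)
  set Rc : (Fin m → ℝ) →L[ℝ] E := LinearMap.toContinuousLinearMap Rl with hRcdef
  have hRc : ∀ u, fderiv ℝ F z (Rc u) = u := by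
    intro u
    have := LinearMap.ext_iff.mp hRl u
    simpa [hRcdef] using this
  -- the auxiliary operator family
  set A : E → ((Fin m → ℝ) →L[ℝ] (Fin m → ℝ)) :=
    fun y => (fderiv ℝ F y).comp Rc with hAdef
  have hAz : A z = 1 := by
    ext u
    simp [hAdef, hRc, ContinuousLinearMap.one_apply]
  have hAcont : ContinuousOn A U := hfd.clm_comp continuousOn_const
  -- open set where A is invertible
  set V : Set E := U ∩ A ⁻¹' {B | IsUnit B} with hVdef
  have hVopen : IsOpen V := hAcont.isOpen_inter_preimage hU Units.isOpen
  have hzV : z ∈ V := ⟨hzU, by simp [Set.mem_preimage, hAz]⟩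
  have hVU : V ⊆ U := Set.inter_subset_left
  have hVunit : ∀ y ∈ V, IsUnit (A y) := fun y hy => hy.2
  -- surjectivity of the derivative on V
  have hsurjV : ∀ y ∈ V, Function.Surjective ⇑(fderiv ℝ F y) := by
    intro y hy u
    have hu := hVunit y hy
    refine ⟨Rc (Ring.inverse (A y) u), ?_⟩
    have h1 : fderiv ℝ F y (Rc (Ring.inverse (A y) u)) =
        (A y * Ring.inverse (A y)) u := rfl
    rw [h1, Ring.mul_inverse_cancel _ hu, ContinuousLinearMap.one_apply]
  -- a good radius
  obtain ⟨t0, ht0, hball⟩ := Metric.mem_nhds_iff.mp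
    (Filter.inter_mem (hVopen.mem_nhds hzV) hs)
  set ρ : ℝ := t0 / 4 with hρdef
  have hρ : 0 < ρ := by positivity
  have hsubV : Metric.closedBall z (3 * ρ) ⊆ V ∩ s := by
    refine subset_trans ?_ hball
    intro y hy
    rw [Metric.mem_closedBall] at hy
    rw [Metric.mem_ball]
    rw [hρdef] at hy
    linarith
  have hKball : LipschitzOnWith K g (Metric.closedBall z (3 * ρ)) :=
    hK.mono (subset_trans hsubV Set.inter_subset_right)
  have hzball : Metric.closedBall z (3 * ρ) ⊆ V := subset_trans hsubV Set.inter_subset_left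
  -- compactness of M ∩ closed ball
  have hMball : M ∩ Metric.closedBall z (3 * ρ) =
      Metric.closedBall z (3 * ρ) ∩ F ⁻¹' {0} := by
    ext y
    constructor
    · rintro ⟨h1, h2⟩
      have h3 : y ∈ M ∩ U := ⟨h1, hVU (hzball h2)⟩
      rw [hMU] at h3
      exact ⟨h2, h3.2⟩
    · rintro ⟨h1, h2⟩
      have h3 : y ∈ M ∩ U := by
        rw [hMU]
        exact ⟨hVU (hzball h1), h2⟩
      exact ⟨h3.1, h1⟩
  have hcompact : IsCompact (M ∩ Metric.closedBall z (3 * ρ)) := by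
    rw [hMball]
    apply (isCompact_closedBall z (3 * ρ)).of_isClosed_subset
    · exact (hF.continuousOn.mono (subset_trans hzball hVU)).preimage_isClosed_of_isClosed
        Metric.isClosed_closedBall isClosed_singleton
    · exact Set.inter_subset_left
  -- unpack the limiting subgradient
  obtain ⟨xs, vs, hxs, hgxs, hfs, hvs⟩ := hv
  simp only [fM_eq_of_mem g hz] at hgxs
  have hevM : ∀ᶠ n in atTop, xs n ∈ M := by
    have h1 : Iio (⊤ : EReal) ∈ 𝓝 ((g z : ℝ) : EReal) :=
      isOpen_Iio.mem_nhds (EReal.coe_lt_top _)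
    filter_upwards [hgxs.eventually_mem h1] with n hn
    by_contra hnM
    simp only [Set.mem_Iio, fM_eq_of_not_mem g hnM] at hn
    exact lt_irrefl _ hn
  -- index selection
  have hsel : ∀ j : ℕ, ∃ n, xs n ∈ M ∧ ‖xs n - z‖ < min ρ (1 / ((j:ℝ) + 1)) ∧
      ‖vs n - v‖ < 1 / ((j:ℝ) + 1) := by
    intro j
    have hpos : 0 < min ρ (1 / ((j:ℝ) + 1)) := lt_min hρ (by positivity)
    have h2 : ∀ᶠ n in atTop, ‖xs n - z‖ < min ρ (1 / ((j:ℝ) + 1)) := by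
      filter_upwards [hxs.eventually_mem (Metric.ball_mem_nhds z hpos)] with n hn
      rwa [Metric.mem_ball, dist_eq_norm] at hn
    have h3 : ∀ᶠ n in atTop, ‖vs n - v‖ < 1 / ((j:ℝ) + 1) := by
      filter_upwards [hvs.eventually_mem (Metric.ball_mem_nhds v (show (0:ℝ) < 1 / ((j:ℝ) + 1) by positivity))] with n hn
      rwa [Metric.mem_ball, dist_eq_norm] at hn
    exact (hevM.and (h2.and h3)).exists
  choose ns hnsM hnsz hnsv using hsel
  -- apply the decomposition lemma at each stage
  have hAj : ∀ j : ℕ, ∃ y₀ w p₀ nv,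
      ‖y₀ - xs (ns j)‖ ≤ min ρ (1 / ((j:ℝ) + 1)) ∧ p₀ ∈ M ∧
      ‖p₀ - xs (ns j)‖ ≤ min ρ (1 / ((j:ℝ) + 1)) ∧
      w ∈ frechetSubdiff (fun y => (g y : EReal)) y₀ ∧
      (∀ ε > (0:ℝ), ∃ δ > (0:ℝ), ∀ q ∈ M, ‖q - p₀‖ < δ → ⟪nv, q - p₀⟫ ≤ ε * ‖q - p₀‖) ∧
      ‖vs (ns j) - w - nv‖ ≤ min ρ (1 / ((j:ℝ) + 1)) := by
    intro j
    have hxj : ‖xs (ns j) - z‖ < ρ := lt_of_lt_of_le (hnsz j) (min_le_left _ _)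
    have hballj : Metric.closedBall (xs (ns j)) (2 * ρ) ⊆ Metric.closedBall z (3 * ρ) := by
      apply Metric.closedBall_subset_closedBall'
      rw [dist_eq_norm]
      linarith
    have hlipj : LipschitzOnWith K g (Metric.closedBall (xs (ns j)) (2 * ρ)) :=
      hKball.mono hballj
    have hcompj : IsCompact (M ∩ Metric.closedBall (xs (ns j)) (2 * ρ)) := by
      have heq : M ∩ Metric.closedBall (xs (ns j)) (2 * ρ) =
          (M ∩ Metric.closedBall z (3 * ρ)) ∩ Metric.closedBall (xs (ns j)) (2 * ρ) := by
        ext y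
        constructor
        · rintro ⟨h1, h2⟩
          exact ⟨⟨h1, hballj h2⟩, h2⟩
        · rintro ⟨⟨h1, _⟩, h2⟩
          exact ⟨h1, h2⟩
      rw [heq]
      exact hcompact.inter_right Metric.isClosed_closedBall
    exact lemA (by positivity) (hnsM j) hlipj hcompj (hfs (ns j))
      (lt_min hρ (by positivity))
  choose ys ws ps nvs hyx hpM hpx hwfs hnv herr using hAj
  -- norm bound on ws
  have hyball : ∀ j, ‖ys j - z‖ ≤ 2 * ρ := by
    intro j
    have h1 := hyx j
    have h2 : ‖xs (ns j) - z‖ < ρ := lt_of_lt_of_le (hnsz j) (min_le_left _ _)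
    have h3 : min ρ (1 / ((j:ℝ) + 1)) ≤ ρ := min_le_left _ _
    calc ‖ys j - z‖ ≤ ‖ys j - xs (ns j)‖ + ‖xs (ns j) - z‖ :=
          norm_sub_le_norm_sub_add_norm_sub _ _ _
      _ ≤ 2 * ρ := by linarith
  have hpball : ∀ j, ps j ∈ Metric.closedBall z (3 * ρ) := by
    intro j
    have h1 := hpx j
    have h2 : ‖xs (ns j) - z‖ < ρ := lt_of_lt_of_le (hnsz j) (min_le_left _ _)
    have h3 : min ρ (1 / ((j:ℝ) + 1)) ≤ ρ := min_le_left _ _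
    rw [Metric.mem_closedBall, dist_eq_norm]
    calc ‖ps j - z‖ ≤ ‖ps j - xs (ns j)‖ + ‖xs (ns j) - z‖ :=
          norm_sub_le_norm_sub_add_norm_sub _ _ _
      _ ≤ 3 * ρ := by linarith
  have hwK : ∀ j, ‖ws j‖ ≤ (K : ℝ) := by
    intro j
    apply fs_norm_le ?_ hKball (hwfs j)
    apply Filter.mem_of_superset (Metric.isOpen_ball.mem_nhds ?_) Metric.ball_subset_closedBall
    rw [Metric.mem_ball, dist_eq_norm]
    linarith [hyball j, hρ]
  -- extract a convergent subsequence of ws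
  obtain ⟨w, hwball, φ, hφ, hwtend⟩ := (isCompact_closedBall (0:E) (K : ℝ)).tendsto_subseq
    (fun j => mem_closedBall_zero_iff.mpr (hwK j))
  -- limits of the various sequences
  have hone : Tendsto (fun j : ℕ => 1 / ((j:ℝ) + 1)) atTop (𝓝 0) :=
    tendsto_one_div_add_atTop_nhds_zero_nat
  have hxsz : Tendsto (fun j => xs (ns j)) atTop (𝓝 z) := by
    rw [← tendsto_sub_nhds_zero_iff]
    apply squeeze_zero_norm (fun j => ((hnsz j).trans_le (min_le_right _ _)).le) hone
  have hysz : Tendsto ys atTop (𝓝 z) := by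
    rw [← tendsto_sub_nhds_zero_iff]
    apply squeeze_zero_norm (a := fun j : ℕ => 2 * (1 / ((j:ℝ) + 1)))
    · intro j
      have h1 := (hyx j).trans (min_le_right _ _)
      have h2 := ((hnsz j).trans_le (min_le_right _ _)).le
      calc ‖ys j - z‖ ≤ ‖ys j - xs (ns j)‖ + ‖xs (ns j) - z‖ :=
            norm_sub_le_norm_sub_add_norm_sub _ _ _
        _ ≤ 2 * (1 / ((j:ℝ) + 1)) := by linarith
    · have h5 := hone.const_mul 2
      rwa [mul_zero] at h5
  have hpsz : Tendsto ps atTop (𝓝 z) := by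
    rw [← tendsto_sub_nhds_zero_iff]
    apply squeeze_zero_norm (a := fun j : ℕ => 2 * (1 / ((j:ℝ) + 1)))
    · intro j
      have h1 := (hpx j).trans (min_le_right _ _)
      have h2 := ((hnsz j).trans_le (min_le_right _ _)).le
      calc ‖ps j - z‖ ≤ ‖ps j - xs (ns j)‖ + ‖xs (ns j) - z‖ :=
            norm_sub_le_norm_sub_add_norm_sub _ _ _
        _ ≤ 2 * (1 / ((j:ℝ) + 1)) := by linarith
    · have h5 := hone.const_mul 2
      rwa [mul_zero] at h5
  have hvsv : Tendsto (fun j => vs (ns j)) atTop (𝓝 v) := by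
    rw [← tendsto_sub_nhds_zero_iff]
    exact squeeze_zero_norm (fun j => (hnsv j).le) hone
  have herr0 : Tendsto (fun j => vs (ns j) - ws j - nvs j) atTop (𝓝 0) :=
    squeeze_zero_norm (fun j => (herr j).trans (min_le_right _ _)) hone
  -- limits along the subsequence
  have hφat : Tendsto φ atTop atTop := hφ.tendsto_atTop
  have hnvtend : Tendsto (fun j => nvs (φ j)) atTop (𝓝 (v - w)) := by
    have h1 : Tendsto (fun j => vs (ns (φ j)) - ws (φ j)) atTop (𝓝 (v - w)) :=
      ((hvsv.comp hφat).sub hwtend)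
    have h2 : Tendsto (fun j => vs (ns (φ j)) - ws (φ j) - nvs (φ j)) atTop (𝓝 0) :=
      herr0.comp hφat
    have h3 := h1.sub h2
    rw [sub_zero] at h3
    convert h3 using 2 with j
    abel
  -- membership of w in the limiting subdifferential
  have hgz : ContinuousAt g z := hK.continuousOn.continuousAt hs
  have hwmem : w ∈ limitingSubdiff (fun y => (g y : EReal)) z := by
    refine ⟨fun j => ys (φ j), fun j => ws (φ j), hysz.comp hφat, ?_,
      fun j => hwfs (φ j), hwtend⟩
    exact (continuous_coe_real_ereal.tendsto _).comp (hgz.tendsto.comp (hysz.comp hφat))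
  refine ⟨w, hwmem, ?_⟩
  -- the normal limit is orthogonal to T z
  have hTz : T z = LinearMap.ker (fderiv ℝ F z : E →ₗ[ℝ] (Fin m → ℝ)) := hT z ⟨hz, hzU⟩
  have hpV : ∀ j, ps j ∈ V := fun j => hzball (hpball j)
  have hinner0 : ∀ t ∈ T z, ⟪v - w, t⟫ = 0 := by
    intro t ht
    rw [hTz, LinearMap.mem_ker] at ht
    -- approximating tangent vectors
    set κ : ℕ → E := fun j => t - Rc (Ring.inverse (A (ps (φ j))) (fderiv ℝ F (ps (φ j)) t))
      with hκdef
    have hκker : ∀ j, κ j ∈ LinearMap.ker (fderiv ℝ F (ps (φ j)) : E →ₗ[ℝ] (Fin m → ℝ)) := by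
      intro j
      rw [LinearMap.mem_ker]
      have h1 : fderiv ℝ F (ps (φ j)) (κ j) = fderiv ℝ F (ps (φ j)) t -
          (A (ps (φ j)) * Ring.inverse (A (ps (φ j)))) (fderiv ℝ F (ps (φ j)) t) := by
        rw [hκdef]
        simp only [map_sub]
        rfl
      rw [ContinuousLinearMap.coe_coe, h1, Ring.mul_inverse_cancel _ (hVunit _ (hpV (φ j))), ContinuousLinearMap.one_apply,
        sub_self]
    -- convergence of the approximating tangents
    have hpφ : Tendsto (fun j => ps (φ j)) atTop (𝓝 z) := hpsz.comp hφat
    have hpφU : Tendsto (fun j => ps (φ j)) atTop (𝓝[U] z) :=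
      tendsto_nhdsWithin_of_tendsto_nhds_of_eventually_within _ hpφ
        (Eventually.of_forall fun j => hVU (hpV (φ j)))
    have hfdtend : Tendsto (fun j => fderiv ℝ F (ps (φ j))) atTop (𝓝 (fderiv ℝ F z)) :=
      (hfd z hzU).tendsto.comp hpφU
    have hAtend : Tendsto (fun j => A (ps (φ j))) atTop (𝓝 (A z)) :=
      (hAcont z hzU).tendsto.comp hpφU
    have hinvcont : ContinuousAt Ring.inverse (A z) := by
      have h1 := NormedRing.inverse_continuousAt (hVunit z hzV).unit
      rwa [IsUnit.unit_spec] at h1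
    have hinvtend : Tendsto (fun j => Ring.inverse (A (ps (φ j)))) atTop
        (𝓝 (Ring.inverse (A z))) := hinvcont.tendsto.comp hAtend
    have hfdt : Tendsto (fun j => fderiv ℝ F (ps (φ j)) t) atTop (𝓝 0) := by
      have h1 : Tendsto (fun j => fderiv ℝ F (ps (φ j)) t) atTop (𝓝 (fderiv ℝ F z t)) :=
        (isBoundedBilinearMap_apply.continuous.tendsto _).comp
          (hfdtend.prodMk_nhds tendsto_const_nhds)
      rwa [show fderiv ℝ F z t = 0 from ht] at h1
    have hval : Tendsto (fun j => Ring.inverse (A (ps (φ j))) (fderiv ℝ F (ps (φ j)) t))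
        atTop (𝓝 0) := by
      have h1 := (isBoundedBilinearMap_apply.continuous.tendsto
        ((Ring.inverse (A z), (0:Fin m → ℝ)))).comp (hinvtend.prodMk_nhds hfdt)
      simpa [Function.comp_def] using h1
    have hκtend : Tendsto κ atTop (𝓝 t) := by
      have h1 : Tendsto (fun j => Rc (Ring.inverse (A (ps (φ j)))
          (fderiv ℝ F (ps (φ j)) t))) atTop (𝓝 0) := by
        have := (Rc.continuous.tendsto 0).comp hval
        simpa [Function.comp_def] using this
      have h2 := (tendsto_const_nhds (x := t) (f := atTop)).sub h1
      rw [sub_zero] at h2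
      exact h2
    -- inner products vanish
    have hzero : ∀ j, ⟪nvs (φ j), κ j⟫ = 0 := by
      intro j
      have hpMj : ps (φ j) ∈ M := hpM (φ j)
      have hpUj : ps (φ j) ∈ U := hVU (hpV (φ j))
      have hsj : Function.Surjective ⇑(fderiv ℝ F (ps (φ j))) := hsurjV _ (hpV (φ j))
      have hle1 := normal_inner_le hU hF hMU hpMj hpUj hsj (hnv (φ j)) (hκker j)
      have hκneg : -κ j ∈ LinearMap.ker (fderiv ℝ F (ps (φ j)) : E →ₗ[ℝ] (Fin m → ℝ)) := neg_mem (hκker j)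
      have hle2 := normal_inner_le hU hF hMU hpMj hpUj hsj (hnv (φ j)) hκneg
      rw [inner_neg_right] at hle2
      linarith
    have hlim : Tendsto (fun j => ⟪nvs (φ j), κ j⟫) atTop (𝓝 ⟪v - w, t⟫) :=
      hnvtend.inner hκtend
    have hconst : (fun j => ⟪nvs (φ j), κ j⟫) = fun _ => (0:ℝ) := funext hzero
    rw [hconst] at hlim
    exact (tendsto_nhds_unique hlim tendsto_const_nhds).symm ▸ rfl
  -- conclude via the orthogonal projection
  have hmemorth : v - w ∈ (T z)ᗮ := by
    rw [Submodule.mem_orthogonal]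
    intro u hu
    rw [real_inner_comm]
    exact hinner0 u hu
  have hproj0 : Submodule.orthogonalProjectionOnto (T z) (v - w) = 0 :=
    Submodule.orthogonalProjectionOnto_apply_of_mem_orthogonal hmemorth
  have hprojeq : Submodule.orthogonalProjectionOnto (T z) v = Submodule.orthogonalProjectionOnto (T z) w := by
    have h1 : v = w + (v - w) := by abel
    rw [h1, map_add, hproj0, add_zero]
  rw [hprojeq]

/-- Every element of the projectional subdifferential is the projection of some
limiting subgradient; in particular `x ↦ ∂_M g(x)` is locally bounded on `M`. -/
theorem stmt0 (M : Set E) (T : E → Submodule ℝ E) (hM : IsSubmanifold M T)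
    (g : E → ℝ) (O : Set E) (hO : IsOpen O) (hMO : M ⊆ O)
    (hlip : LocLipschitzOn g O) :
    (∀ z ∈ M, ∀ wM ∈ projSubdiff g M T z,
      ∃ w ∈ limitingSubdiff (fun y => (g y : EReal)) z,
        wM = ((Submodule.orthogonalProjectionOnto (T z) w : T z) : E)) ∧
    (∀ z ∈ M, ∃ ρ > (0:ℝ), ∃ c : ℝ, ∀ x ∈ M, ‖x - z‖ < ρ →
      ∀ v ∈ projSubdiff g M T x, ‖v‖ ≤ c) := by
  have hpart1 : ∀ z ∈ M, ∀ wM ∈ projSubdiff g M T z,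
      ∃ w ∈ limitingSubdiff (fun y => (g y : EReal)) z,
        wM = ((Submodule.orthogonalProjectionOnto (T z) w : T z) : E) := by
    intro z hz wM hwM
    obtain ⟨v, hv, rfl⟩ := hwM
    obtain ⟨w, hw, heq⟩ := part1 hM hMO hlip hz hv
    exact ⟨w, hw, heq⟩
  refine ⟨hpart1, ?_⟩
  intro z hz
  obtain ⟨s, hs, K, hK⟩ := hlip z (hMO hz)
  obtain ⟨t0, ht0, hball⟩ := Metric.mem_nhds_iff.mp hs
  refine ⟨t0 / 2, by positivity, (K : ℝ), ?_⟩
  intro x hxM hxz wM hwM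
  obtain ⟨w, hw, rfl⟩ := hpart1 x hxM wM hwM
  have hxball : x ∈ Metric.ball z t0 := by
    rw [Metric.mem_ball, dist_eq_norm]; linarith
  have hwn : ‖w‖ ≤ (K : ℝ) :=
    limiting_norm_le Metric.isOpen_ball hxball (hK.mono hball) hw
  have h1 : ‖((Submodule.orthogonalProjectionOnto (T x) w : T x) : E)‖ ≤ ‖w‖ := by
    have h2 := (Submodule.orthogonalProjectionOnto (T x)).le_opNorm w
    have h3 := Submodule.orthogonalProjectionOnto_norm_le (T x)
    have h4 : ‖((Submodule.orthogonalProjectionOnto (T x) w : T x) : E)‖ =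
        ‖Submodule.orthogonalProjectionOnto (T x) w‖ := rfl
    rw [h4]
    calc ‖Submodule.orthogonalProjectionOnto (T x) w‖ ≤ ‖Submodule.orthogonalProjectionOnto (T x)‖ * ‖w‖ := h2
      _ ≤ 1 * ‖w‖ := mul_le_mul_of_nonneg_right h3 (norm_nonneg w)
      _ = ‖w‖ := one_mul _
  exact h1.trans hwn

end
end

section
/- Let M ⊆ E be a smooth embedded submanifold and let g: E → ℝ be locally Lipschitz continuous on an open superset of M. Then the projectional limiting subdifferential is nonempty at every point of M, i.e. ∂_M g(x̄) ≠ ∅ for all x̄ ∈ M. -/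
open Set Filter Topology

noncomputable section

variable {E : Type*} [NormedAddCommGroup E] [InnerProductSpace ℝ E] [FiniteDimensional ℝ E]

/-- The projectional limiting subdifferential is nonempty at every point of `M`. -/
theorem stmt1 (M : Set E) (T : E → Submodule ℝ E) (hM : IsSubmanifold M T)
    (g : E → ℝ) (O : Set E) (hO : IsOpen O) (hMO : M ⊆ O)
    (hlip : LocLipschitzOn g O) :
    ∀ z ∈ M, (projSubdiff g M T z).Nonempty := by
  intro z hz
  set G : E → EReal := fun y => (g y : EReal) + indicatorFun M y with hG
  obtain ⟨s, hs, K, hK⟩ := hlip z (hMO hz)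
  obtain ⟨m, U, F, hUopen, hzU, hFcd, -, hMU, -⟩ := hM z hz
  obtain ⟨r, hr, hball⟩ : ∃ r > 0, Metric.closedBall z r ⊆ U ∩ s := by
    have : U ∩ s ∈ 𝓝 z := Filter.inter_mem (hUopen.mem_nhds hzU) hs
    exact (Metric.nhds_basis_closedBall.mem_iff.1 this)
  set C : Set E := M ∩ Metric.closedBall z r with hC
  have hzC : z ∈ C := ⟨hz, Metric.mem_closedBall_self hr.le⟩
  have hCsubU : Metric.closedBall z r ⊆ U := fun y hy => (hball hy).1
  have hCsubs : Metric.closedBall z r ⊆ s := fun y hy => (hball hy).2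
  have hCeq : C = Metric.closedBall z r ∩ F ⁻¹' {0} := by
    ext y
    constructor
    · rintro ⟨hyM, hyB⟩
      have : y ∈ M ∩ U := ⟨hyM, hCsubU hyB⟩
      rw [hMU] at this
      exact ⟨hyB, this.2⟩
    · rintro ⟨hyB, hyF⟩
      have : y ∈ M ∩ U := by
        rw [hMU]; exact ⟨hCsubU hyB, hyF⟩
      exact ⟨this.1, hyB⟩
  have hCcl : IsClosed C := by
    rw [hCeq]
    exact ((hFcd.continuousOn.mono hCsubU)).preimage_isClosed_of_isClosed
      Metric.isClosed_closedBall isClosed_singleton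
  have hCcp : IsCompact C :=
    (isCompact_closedBall z r).of_isClosed_subset hCcl (fun y hy => hy.2)
  have hgc : ContinuousOn g s := hK.continuousOn
  set a : ℝ := (K + 1) / r with ha'
  have ha : 0 < a := div_pos (by positivity) hr
  set c : ℕ → ℝ := fun n => (n + 1) * a with hc'
  have hc : ∀ n, 0 < c n := fun n => by positivity
  -- minimizers of the penalized functions
  have hmin : ∀ n : ℕ, ∃ x ∈ C, IsMinOn (fun y => g y + c n * ‖y - z‖ ^ 2) C x := by
    intro n
    refine hCcp.exists_isMinOn ⟨z, hzC⟩ ?_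
    refine ContinuousOn.add (hgc.mono fun y hy => hCsubs hy.2) ?_
    exact (continuous_const.mul ((continuous_id.sub continuous_const).norm.pow 2)).continuousOn
  choose x hxC hxmin using hmin
  -- the basic bound
  have hxb : ∀ n, c n * ‖x n - z‖ ≤ K := by
    intro n
    have h1 : g (x n) + c n * ‖x n - z‖ ^ 2 ≤ g z := by
      have := hxmin n hzC
      simpa using this
    have h2 : g z - g (x n) ≤ K * ‖x n - z‖ := by
      have hd := hK.dist_le_mul z (hCsubs hzC.2) (x n) (hCsubs (hxC n).2)
      rw [Real.dist_eq] at hd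
      have h3 : dist z (x n) = ‖x n - z‖ := by rw [dist_comm, dist_eq_norm]
      calc g z - g (x n) ≤ |g z - g (x n)| := le_abs_self _
        _ ≤ K * dist z (x n) := hd
        _ = K * ‖x n - z‖ := by rw [h3]
    rcases eq_or_lt_of_le (norm_nonneg (x n - z)) with h | h
    · rw [← h]; simpa using K.coe_nonneg
    · nlinarith [hc n]
  have hxr : ∀ n, ‖x n - z‖ < r := by
    intro n
    have h1 : c n * ‖x n - z‖ < c n * r := by
      have hca : a ≤ c n := by
        have h0 : (1 : ℝ) ≤ (n : ℝ) + 1 := by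
          have := Nat.cast_nonneg (α := ℝ) n; linarith
        calc a = 1 * a := (one_mul a).symm
          _ ≤ ((n : ℝ) + 1) * a := by gcongr
      have har : a * r = K + 1 := by
        rw [ha', div_mul_cancel₀]; exact ne_of_gt hr
      calc c n * ‖x n - z‖ ≤ K := hxb n
        _ < K + 1 := by linarith
        _ = a * r := har.symm
        _ ≤ c n * r := by gcongr
    exact lt_of_mul_lt_mul_left h1 (hc n).le
  have hxd : ∀ n, ‖x n - z‖ ≤ K / a * (1 / ((n : ℝ) + 1)) := by
    intro n
    have h1 : ‖x n - z‖ ≤ K / c n := by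
      rw [le_div_iff₀ (hc n)]
      calc ‖x n - z‖ * c n = c n * ‖x n - z‖ := mul_comm _ _
        _ ≤ K := hxb n
    calc ‖x n - z‖ ≤ K / c n := h1
      _ = K / a * (1 / ((n : ℝ) + 1)) := by
        simp only [hc']
        rw [mul_comm ((n : ℝ) + 1) a, ← div_div, div_eq_mul_one_div]
  have hxz : Tendsto x atTop (𝓝 z) := by
    rw [tendsto_iff_dist_tendsto_zero]
    refine squeeze_zero (f := fun n => dist (x n) z)
      (g := fun n => (K : ℝ) / a * (1 / ((n : ℝ) + 1)))
      (fun n => dist_nonneg) (fun n => ?_) ?_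
    · simp only [dist_eq_norm]; exact hxd n
    · have := tendsto_one_div_add_atTop_nhds_zero_nat.const_mul (K / a : ℝ)
      simpa using this
  set v : ℕ → E := fun n => (2 * c n) • (z - x n) with hv'
  have hvb : ∀ n, ‖v n‖ ≤ 2 * K := by
    intro n
    rw [hv']
    rw [norm_smul, Real.norm_eq_abs, abs_of_pos (by positivity : (0:ℝ) < 2 * c n),
      norm_sub_rev]
    calc 2 * c n * ‖x n - z‖ = 2 * (c n * ‖x n - z‖) := by ring
      _ ≤ 2 * K := by have := hxb n; linarith
  -- Fréchet subgradients
  have hfre : ∀ n, v n ∈ frechetSubdiff G (x n) := by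
    intro n ε hε
    have hδpos : 0 < min (ε / c n) (r - ‖x n - z‖) :=
      lt_min (div_pos hε (hc n)) (by linarith [hxr n])
    filter_upwards [Metric.ball_mem_nhds (x n) hδpos] with y hy
    have hy' : ‖y - x n‖ < min (ε / c n) (r - ‖x n - z‖) := by
      rw [Metric.mem_ball, dist_eq_norm] at hy; exact hy
    by_cases hyM : y ∈ M
    · have hyB : y ∈ Metric.closedBall z r := by
        rw [Metric.mem_closedBall, dist_eq_norm]
        have h2 : ‖y - x n‖ < r - ‖x n - z‖ := lt_of_lt_of_le hy' (min_le_right _ _)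
        calc ‖y - z‖ = dist y z := (dist_eq_norm _ _).symm
          _ ≤ dist y (x n) + dist (x n) z := dist_triangle _ _ _
          _ = ‖y - x n‖ + ‖x n - z‖ := by rw [dist_eq_norm, dist_eq_norm]
          _ ≤ r := by linarith
      have hyC : y ∈ C := ⟨hyM, hyB⟩
      have hmin' : g (x n) + c n * ‖x n - z‖ ^ 2 ≤ g y + c n * ‖y - z‖ ^ 2 := hxmin n hyC
      have hexp : ‖y - z‖ ^ 2
          = ‖y - x n‖ ^ 2 + 2 * inner ℝ (y - x n) (x n - z) + ‖x n - z‖ ^ 2 := by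
        have h := norm_add_sq_real (y - x n) (x n - z)
        rw [show (y - x n) + (x n - z) = y - z by abel] at h
        linarith
      have hinner : (inner ℝ (v n) (y - x n) : ℝ)
          = -(2 * c n * inner ℝ (y - x n) (x n - z)) := by
        rw [hv', real_inner_smul_left,
          show z - x n = -(x n - z) by abel, inner_neg_left, real_inner_comm]
        ring
      have hsq : c n * ‖y - x n‖ ^ 2 ≤ ε * ‖y - x n‖ := by
        have h1 : ‖y - x n‖ < ε / c n := lt_of_lt_of_le hy' (min_le_left _ _)
        have h2 : c n * ‖y - x n‖ ≤ ε := by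
          rw [mul_comm, ← le_div_iff₀ (hc n)]
          exact h1.le
        nlinarith [norm_nonneg (y - x n)]
      have hexp' : c n * ‖y - z‖ ^ 2 = c n * ‖y - x n‖ ^ 2
          + 2 * c n * inner ℝ (y - x n) (x n - z) + c n * ‖x n - z‖ ^ 2 := by
        rw [hexp]; ring
      have hgoal : g (x n) + ((inner ℝ (v n) (y - x n) : ℝ) - ε * ‖y - x n‖) ≤ g y := by
        rw [hinner]; linarith
      show G (x n) + _ ≤ G y
      simp only [hG, indicatorFun, if_pos hyM, if_pos (hxC n).1, add_zero]
      rw [← EReal.coe_add, EReal.coe_le_coe_iff]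
      exact hgoal
    · show G (x n) + _ ≤ G y
      simp only [hG, indicatorFun, if_neg hyM, EReal.coe_add_top]
      exact le_top
  -- extract a convergent subsequence of the subgradients
  have hvmem : ∀ n, v n ∈ Metric.closedBall (0 : E) (2 * K) := by
    intro n
    rw [Metric.mem_closedBall, dist_zero_right]
    exact hvb n
  obtain ⟨w, -, φ, hφ, hvw⟩ :=
    (isCompact_closedBall (0 : E) (2 * K)).tendsto_subseq hvmem
  have hxφ : Tendsto (x ∘ φ) atTop (𝓝 z) := hxz.comp hφ.tendsto_atTop
  have hwmem : w ∈ limitingSubdiff G z := by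
    refine ⟨x ∘ φ, v ∘ φ, hxφ, ?_, fun n => hfre (φ n), hvw⟩
    have hGx : ∀ n, G ((x ∘ φ) n) = ((g (x (φ n)) : ℝ) : EReal) := fun n => by
      simp [hG, indicatorFun, (hxC (φ n)).1]
    have hGz : G z = ((g z : ℝ) : EReal) := by simp [hG, indicatorFun, hz]
    rw [hGz]
    simp only [hGx]
    refine (continuous_coe_real_ereal.tendsto _).comp ?_
    have hcw : ContinuousWithinAt g s z := hgc z (hCsubs hzC.2)
    refine hcw.tendsto.comp ?_
    refine tendsto_nhdsWithin_of_tendsto_nhds_of_eventually_within _ hxφ ?_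
    exact Eventually.of_forall fun n => hCsubs (hxC (φ n)).2
  exact ⟨_, Set.mem_image_of_mem _ hwmem⟩

end
end

section
/- Suppose φ: M → ℝ satisfies Assumption A1 with respect to a retraction R on the smooth embedded submanifold M ⊆ E. Let σ ∈ (0,1), a, b > 0, x ∈ M, d ∈ T_xM and w ∈ ∂_M φ(x) be such that ⟨w, d⟩ ≤ −a‖d‖² and ‖w‖ ≤ b‖d‖. Then there exists t > 0 such that φ(R_x(τ d)) ≤ φ(x) + σ τ ⟨w, d⟩ for all τ ∈ (0, t). -/
open Set Filter Topology

noncomputable section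

variable {E : Type*} [NormedAddCommGroup E] [InnerProductSpace ℝ E] [FiniteDimensional ℝ E]

/-- A retraction on the submanifold `M` with tangent spaces `T`: a `C²` map on the
tangent bundle with values in `M` such that `R_x(0) = x` and `DR_x(0) = id`. -/
structure Retraction (M : Set E) (T : E → Submodule ℝ E) where
  R : E → E → E
  mem_target : ∀ x ∈ M, ∀ ξ ∈ T x, R x ξ ∈ M
  map_zero : ∀ x ∈ M, R x 0 = x
  smooth : ContDiffOn ℝ 2 (fun p : E × E => R p.1 p.2) {p : E × E | p.1 ∈ M ∧ p.2 ∈ T p.1}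
  deriv_id : ∀ x ∈ M, ∀ ξ ∈ T x, HasDerivAt (fun t : ℝ => R x (t • ξ)) ξ 0

/-- Assumption A1: a local nonsmooth descent property of `φ` along the retraction,
together with local boundedness of the projectional subdifferential on `M`. -/
def AssumptionA1 (M : Set E) (T : E → Submodule ℝ E) (Ret : Retraction M T) (φ : E → ℝ) : Prop :=
  (∀ z ∈ M, ∃ κ > (0:ℝ), ∃ r > (0:ℝ), ∃ O : Set E, IsOpen O ∧ z ∈ O ∧
    ∀ x ∈ M ∩ O, ∀ ξ ∈ T x, ‖ξ‖ ≤ r → ∀ w ∈ projSubdiff φ M T x,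
      φ (Ret.R x ξ) - (φ x + (inner ℝ w ξ : ℝ)) ≤ κ * ‖ξ‖ ^ 2) ∧
  (∀ z ∈ M, ∃ ρ > (0:ℝ), ∃ c : ℝ, ∀ x ∈ M, ‖x - z‖ < ρ →
    ∀ w ∈ projSubdiff φ M T x, ‖w‖ ≤ c)

/-- The Armijo-type linesearch condition holds for all sufficiently small stepsizes. -/
theorem stmt4 (M : Set E) (T : E → Submodule ℝ E) (hM : IsSubmanifold M T)
    (Ret : Retraction M T) (φ : E → ℝ) (hA1 : AssumptionA1 M T Ret φ)
    (σ a b : ℝ) (hσ : σ ∈ Set.Ioo (0:ℝ) 1) (ha : 0 < a) (hb : 0 < b)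
    (x : E) (hx : x ∈ M) (d : E) (hd : d ∈ T x)
    (w : E) (hw : w ∈ projSubdiff φ M T x)
    (hwd : (inner ℝ w d : ℝ) ≤ -a * ‖d‖ ^ 2) (hwb : ‖w‖ ≤ b * ‖d‖) :
    ∃ t > (0:ℝ), ∀ τ : ℝ, 0 < τ → τ < t →
      φ (Ret.R x (τ • d)) ≤ φ x + σ * τ * (inner ℝ w d : ℝ) := by
  obtain ⟨κ, hκ, r, hr, O, hO, hxO, hmain⟩ := hA1.1 x hx
  have hσ1 : 0 < 1 - σ := sub_pos.mpr hσ.2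
  by_cases hd0 : d = 0
  · refine ⟨1, one_pos, fun τ hτ hτ1 => ?_⟩
    simp [hd0, Ret.map_zero x hx]
  · have hdn : 0 < ‖d‖ := norm_pos_iff.mpr hd0
    refine ⟨min (r / ‖d‖) ((1 - σ) * a / κ), lt_min (by positivity)
      (by have := hσ.2; positivity), fun τ hτ hτt => ?_⟩
    have hτr : τ < r / ‖d‖ := lt_of_lt_of_le hτt (min_le_left _ _)
    have hτκ : τ < (1 - σ) * a / κ := lt_of_lt_of_le hτt (min_le_right _ _)
    have hξn : ‖τ • d‖ ≤ r := by
      rw [norm_smul, Real.norm_eq_abs, abs_of_pos hτ]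
      calc τ * ‖d‖ ≤ (r / ‖d‖) * ‖d‖ := by nlinarith
        _ = r := by field_simp
    have hkey := hmain x ⟨hx, hxO⟩ (τ • d) (Submodule.smul_mem _ τ hd) hξn w hw
    rw [real_inner_smul_right] at hkey
    rw [norm_smul, Real.norm_eq_abs, abs_of_pos hτ] at hkey
    have hκτ : κ * τ ≤ (1 - σ) * a := by
      have := (lt_div_iff₀ hκ).mp hτκ; nlinarith
    nlinarith [mul_le_mul_of_nonneg_right hκτ (mul_nonneg hτ.le (sq_nonneg ‖d‖)),
      mul_le_mul_of_nonneg_left hwd (mul_nonneg hσ1.le hτ.le)]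

end
end

section
/- Under the standing hypotheses, define δ_k := −σ τ_k ⟨w^k, d^k⟩ for each k. Then δ_k ≥ σ a τ_k ‖d^k‖² ≥ 0 and φ(x^{k+1}) + (1 − p_{k+1}) δ_k ≤ R_{k+1} ≤ R_k − p_{k+1} δ_k for all k ∈ ℕ. -/
open Set Filter Topology

noncomputable section

variable {E : Type*} [NormedAddCommGroup E] [InnerProductSpace ℝ E] [FiniteDimensional ℝ E]

/-- A run of the nonmonotone subgradient method on the manifold `M`:
subgradients `w k`, directions `d k`, stepsizes `τ k` obtained by backtracking
from initial trial stepsizes `τhat k` (with `j k` backtracking steps), iterates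
`x k` and reference values `Rv k` updated by the mean-rule with weights `p k`. -/
structure AlgSeq (M : Set E) (T : E → Submodule ℝ E) (Ret : Retraction M T) (φ : E → ℝ)
    (σ β τmin τmax pmin a b : ℝ) where
  x : ℕ → E
  w : ℕ → E
  d : ℕ → E
  τhat : ℕ → ℝ
  j : ℕ → ℕ
  τ : ℕ → ℝ
  p : ℕ → ℝ
  Rv : ℕ → ℝ
  x_mem : ∀ k, x k ∈ M
  w_mem : ∀ k, w k ∈ projSubdiff φ M T (x k)
  w_ne : ∀ k, w k ≠ 0
  d_mem : ∀ k, d k ∈ T (x k)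
  d_ne : ∀ k, d k ≠ 0
  descent : ∀ k, (inner ℝ (w k) (d k) : ℝ) ≤ -a * ‖d k‖ ^ 2
  dir_bound : ∀ k, ‖w k‖ ≤ b * ‖d k‖
  τhat_mem : ∀ k, τhat k ∈ Set.Icc τmin τmax
  τ_def : ∀ k, τ k = β ^ (j k) * τhat k
  j_least : ∀ k, IsLeast {i : ℕ |
      φ (Ret.R (x k) ((β ^ i * τhat k) • d k)) ≤
        Rv k + σ * (β ^ i * τhat k) * (inner ℝ (w k) (d k) : ℝ)} (j k)
  x_succ : ∀ k, x (k + 1) = Ret.R (x k) (τ k • d k)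
  p_mem : ∀ k, p (k + 1) ∈ Set.Icc pmin 1
  R_zero : Rv 0 = φ (x 0)
  R_succ : ∀ k, Rv (k + 1) = (1 - p (k + 1)) * Rv k + p (k + 1) * φ (x (k + 1))

/-- Basic descent estimates for the reference values, with
`δ_k := -σ τ_k ⟨w^k, d^k⟩`. -/
theorem stmt5
    (M : Set E) (T : E → Submodule ℝ E) (Ret : Retraction M T) (φ : E → ℝ)
    (σ β τmin τmax pmin a b : ℝ)
    (hσ : σ ∈ Set.Ioo (0:ℝ) 1) (hβ : β ∈ Set.Ioo (0:ℝ) 1)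
    (hτmin : 0 < τmin) (hττ : τmin ≤ τmax)
    (hpmin : pmin ∈ Set.Ioc (0:ℝ) 1) (ha : 0 < a) (hb : 0 < b)
    (hM : IsSubmanifold M T)
    (hφcont : ContinuousOn φ M)
    (hφbdd : BddBelow (φ '' M))
    (hA1 : AssumptionA1 M T Ret φ)
    (A : AlgSeq M T Ret φ σ β τmin τmax pmin a b)
    :
    ∀ k : ℕ,
      σ * a * A.τ k * ‖A.d k‖ ^ 2 ≤ -(σ * A.τ k * (inner ℝ (A.w k) (A.d k) : ℝ)) ∧
      0 ≤ σ * a * A.τ k * ‖A.d k‖ ^ 2 ∧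
      φ (A.x (k + 1)) + (1 - A.p (k + 1)) * (-(σ * A.τ k * (inner ℝ (A.w k) (A.d k) : ℝ)))
        ≤ A.Rv (k + 1) ∧
      A.Rv (k + 1) ≤ A.Rv k - A.p (k + 1) * (-(σ * A.τ k * (inner ℝ (A.w k) (A.d k) : ℝ))) := by
  intro k
  have hτhat := A.τhat_mem k
  have hτpos : 0 < A.τ k := by
    rw [A.τ_def k]
    exact mul_pos (pow_pos hβ.1 _) (lt_of_lt_of_le hτmin hτhat.1)
  have hwd := A.descent k
  have hd2 : (0:ℝ) < ‖A.d k‖ ^ 2 := by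
    have := norm_pos_iff.mpr (A.d_ne k)
    positivity
  have h1 : σ * a * A.τ k * ‖A.d k‖ ^ 2 ≤ -(σ * A.τ k * (inner ℝ (A.w k) (A.d k) : ℝ)) := by
    have hσ0 : 0 < σ := hσ.1
    nlinarith [mul_le_mul_of_nonneg_left hwd (by positivity : (0:ℝ) ≤ σ * A.τ k)]
  have hσ0 : 0 < σ := hσ.1
  have h0 : 0 ≤ σ * a * A.τ k * ‖A.d k‖ ^ 2 := by positivity
  -- Armijo condition
  have harm : φ (A.x (k + 1)) ≤ A.Rv k + σ * A.τ k * (inner ℝ (A.w k) (A.d k) : ℝ) := by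
    have := (A.j_least k).1
    simp only [Set.mem_setOf_eq] at this
    rw [A.x_succ k, A.τ_def k]
    exact this
  have hp := A.p_mem k
  have hp0 : 0 < A.p (k + 1) := lt_of_lt_of_le hpmin.1 hp.1
  have hp1 : A.p (k + 1) ≤ 1 := hp.2
  have hR := A.R_succ k
  refine ⟨h1, h0, ?_, ?_⟩
  · rw [hR]; nlinarith
  · rw [hR]; nlinarith

end
end

section
/- Let {s_k} ⊆ [0, ∞) be a monotonically decreasing sequence with s_k → 0, and suppose there exist constants α, β > 0 such that s_k^α ≤ β(s_k − s_{k+1}) for all sufficiently large k. Then: (a) if α ∈ (0, 1], the sequence {s_k} converges Q-linearly to zero with rate 1 − 1/β, i.e. s_{k+1} ≤ (1 − 1/β) s_k for all sufficiently large k; (b) if α > 1, there exists a constant η > 0 such that s_k ≤ η k^{−1/(α−1)} for all sufficiently large k. -/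
open Filter Topology Real

lemma aux_bern {ε r : ℝ} (hε : 0 < ε) (hr0 : 0 < r) (hr1 : r ≤ 1) :
    1 + ε * (1 - r) ≤ r ^ (-ε) := by
  have hrε : 0 < r ^ ε := rpow_pos_of_pos hr0 ε
  rw [rpow_neg hr0.le]
  rcases le_or_gt ε 1 with hε1 | hε1
  · set u := ε * (1 - r) with hu
    have hu0 : 0 ≤ u := by apply mul_nonneg hε.le; linarith
    have hb : r ^ ε ≤ 1 - u := by
      have := rpow_one_add_le_one_add_mul_self (s := r - 1) (by linarith) hε.le hε1
      have he : 1 + (r - 1) = r := by ring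
      rw [he] at this
      nlinarith
    have hu1 : 0 < 1 - u := lt_of_lt_of_le hrε hb
    calc 1 + u ≤ (1 - u)⁻¹ := by
          rw [← one_div, le_div_iff₀ hu1]
          nlinarith
      _ ≤ (r ^ ε)⁻¹ := by
          apply inv_anti₀ hrε hb
  · have hs : (0:ℝ) ≤ 1 / r - 1 := by
      rw [sub_nonneg, le_div_iff₀ hr0]; linarith
    have := one_add_mul_self_le_rpow_one_add (s := 1 / r - 1) (by linarith) hε1.le
    have he : 1 + (1 / r - 1) = r⁻¹ := by field_simp; ring
    rw [he, inv_rpow hr0.le] at this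
    have h2 : 1 - r ≤ 1 / r - 1 := by
      rw [div_sub' hr0.ne', le_div_iff₀ hr0]; nlinarith
    have h3 : ε * (1 - r) ≤ ε * (1 / r - 1) := mul_le_mul_of_nonneg_left h2 hε.le
    linarith

lemma aux_conv {ε x y : ℝ} (hε : 0 < ε) (hy : 0 < y) (hxy : y ≤ x) :
    x ^ (-ε) + ε * x ^ (-(ε + 1)) * (x - y) ≤ y ^ (-ε) := by
  have hx : 0 < x := hy.trans_le hxy
  have hr0 : 0 < y / x := div_pos hy hx
  have hr1 : y / x ≤ 1 := by rw [div_le_one hx]; exact hxy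
  have hb := aux_bern hε hr0 hr1
  have hxε : 0 < x ^ (-ε) := rpow_pos_of_pos hx _
  have hmul : x ^ (-ε) * (1 + ε * (1 - y / x)) ≤ x ^ (-ε) * ((y / x) ^ (-ε)) :=
    mul_le_mul_of_nonneg_left hb hxε.le
  have h1 : x ^ (-ε) * ((y / x) ^ (-ε)) = y ^ (-ε) := by
    rw [div_rpow hy.le hx.le]
    field_simp
  have h2 : x ^ (-ε) * (1 + ε * (1 - y / x)) =
      x ^ (-ε) + ε * x ^ (-(ε + 1)) * (x - y) := by
    have h3 : x ^ (-(ε + 1)) = x ^ (-ε) * x⁻¹ := by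
      rw [show -(ε + 1) = -ε + (-1) by ring, rpow_add hx, rpow_neg_one]
    rw [h3]
    field_simp
  rw [h1, h2] at hmul
  exact hmul

/-- Rates of convergence for nonnegative decreasing null sequences satisfying
`s_k ^ α ≤ β (s_k - s_{k+1})`: Q-linear convergence if `α ∈ (0, 1]`, and
the sublinear rate `s_k ≤ η k^{-1/(α-1)}` if `α > 1`. -/
theorem stmt19 (s : ℕ → ℝ) (hnonneg : ∀ k, 0 ≤ s k) (hanti : Antitone s)
    (hlim : Tendsto s atTop (𝓝 0))
    (α β : ℝ) (hα : 0 < α) (hβ : 0 < β)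
    (h : ∃ N : ℕ, ∀ k ≥ N, s k ^ α ≤ β * (s k - s (k + 1))) :
    (α ≤ 1 → ∃ N : ℕ, ∀ k ≥ N, s (k + 1) ≤ (1 - 1 / β) * s k) ∧
    (1 < α → ∃ η > (0:ℝ), ∃ N : ℕ, ∀ k ≥ N,
      s k ≤ η * (k : ℝ) ^ (-(1 / (α - 1)))) := by
  obtain ⟨N0, hN0⟩ := h
  constructor
  · intro hα1
    obtain ⟨M, hM⟩ := eventually_atTop.mp (hlim.eventually (gt_mem_nhds one_pos))
    refine ⟨max N0 M, fun k hk => ?_⟩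
    have hk0 : N0 ≤ k := le_trans (le_max_left _ _) hk
    have hk1 := hN0 k hk0
    have hs1 : s k < 1 := hM k (le_trans (le_max_right _ _) hk)
    have h2 : s k ≤ s k ^ α := by
      rcases eq_or_lt_of_le (hnonneg k) with h0 | h0
      · rw [← h0, Real.zero_rpow hα.ne']
      · calc s k = s k ^ (1:ℝ) := (Real.rpow_one _).symm
          _ ≤ s k ^ α := Real.rpow_le_rpow_of_exponent_ge h0 hs1.le hα1
    have h3 : s k ≤ β * (s k - s (k + 1)) := h2.trans hk1
    have h4 : s k / β ≤ s k - s (k + 1) := by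
      rw [div_le_iff₀ hβ]; nlinarith
    have h5 : (1 - 1 / β) * s k = s k - s k / β := by ring
    linarith
  · intro hα1
    set ε := α - 1 with hεdef
    have hε : 0 < ε := by simp only [hεdef]; linarith
    clear_value ε
    have key : ∀ k ≥ N0, 0 < s (k + 1) →
        s k ^ (-ε) + ε / β ≤ s (k + 1) ^ (-ε) := by
      intro k hk hpos
      have hsk : 0 < s k := hpos.trans_le (hanti (Nat.le_succ k))
      have hc := aux_conv hε hpos (hanti (Nat.le_succ k))
      have hα' : -(ε + 1) = -α := by rw [hεdef]; ring
      rw [hα'] at hc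
      have hkα : 0 < s k ^ α := rpow_pos_of_pos hsk _
      have hdiff : s k ^ α / β ≤ s k - s (k + 1) := by
        rw [div_le_iff₀ hβ]
        have := hN0 k hk
        nlinarith
      have hneg : s k ^ (-α) = (s k ^ α)⁻¹ := rpow_neg hsk.le α
      have h6 : ε / β ≤ ε * s k ^ (-α) * (s k - s (k + 1)) := by
        calc ε / β = ε * s k ^ (-α) * (s k ^ α / β) := by
              rw [hneg]; field_simp
          _ ≤ ε * s k ^ (-α) * (s k - s (k + 1)) := by
              apply mul_le_mul_of_nonneg_left hdiff
              positivity
      linarith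
    have ind : ∀ m : ℕ, 0 < s (N0 + m) → (m : ℝ) * (ε / β) ≤ s (N0 + m) ^ (-ε) := by
      intro m
      induction m with
      | zero => intro _; simpa using rpow_nonneg (hnonneg N0) (-ε)
      | succ m ih =>
        intro hpos
        have hpos' : 0 < s (N0 + m) :=
          hpos.trans_le (hanti (by omega))
        have h7 := key (N0 + m) (Nat.le_add_right _ _) (by
          have : N0 + m + 1 = N0 + (m + 1) := by omega
          rw [this]; exact hpos)
        have h8 := ih hpos'
        have : N0 + m + 1 = N0 + (m + 1) := by omega
        rw [this] at h7
        push_cast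
        linarith
    set c := ε / β with hcdef
    have hc : 0 < c := div_pos hε hβ
    refine ⟨(c / 2) ^ (-(1 / ε)), rpow_pos_of_pos (by linarith) _, max (2 * N0) 1,
      fun k hk => ?_⟩
    have hk1 : 1 ≤ k := le_trans (le_max_right _ _) hk
    have hk2 : 2 * N0 ≤ k := le_trans (le_max_left _ _) hk
    have hN0k : N0 ≤ k := by omega
    have hrpos : (0:ℝ) ≤ (c / 2) ^ (-(1 / ε)) * (k : ℝ) ^ (-(1 / ε)) := by
      apply mul_nonneg (rpow_nonneg (by linarith) _) (rpow_nonneg (Nat.cast_nonneg k) _)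
    rcases eq_or_lt_of_le (hnonneg k) with h0 | h0
    · rw [← h0]; exact hrpos
    · have hmk := ind (k - N0) (by rwa [Nat.add_sub_cancel' hN0k])
      rw [Nat.add_sub_cancel' hN0k] at hmk
      have hcast : ((k - N0 : ℕ) : ℝ) = (k : ℝ) - N0 := Nat.cast_sub hN0k
      rw [hcast] at hmk
      have hhalf : (k : ℝ) / 2 ≤ (k : ℝ) - N0 := by
        have : (2 * N0 : ℝ) ≤ k := by exact_mod_cast hk2
        linarith
      have hkb : c / 2 * (k : ℝ) ≤ s k ^ (-ε) := by
        calc c / 2 * (k : ℝ) = ((k:ℝ) / 2) * c := by ring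
          _ ≤ ((k:ℝ) - N0) * c := by
              apply mul_le_mul_of_nonneg_right hhalf hc.le
          _ ≤ s k ^ (-ε) := hmk
      have hkpos : (0:ℝ) < c / 2 * (k : ℝ) := by
        have : (1:ℝ) ≤ (k:ℝ) := by exact_mod_cast hk1
        nlinarith
      have hz : -(1 / ε) ≤ (0:ℝ) := neg_nonpos.mpr (by positivity)
      have hmono := Real.rpow_le_rpow_of_nonpos hkpos hkb hz
      have hid : (s k ^ (-ε)) ^ (-(1 / ε)) = s k := by
        rw [← Real.rpow_mul (hnonneg k)]
        have : (-ε) * (-(1 / ε)) = 1 := by field_simp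
        rw [this, Real.rpow_one]
      have hsplit : (c / 2 * (k : ℝ)) ^ (-(1 / ε)) =
          (c / 2) ^ (-(1 / ε)) * (k : ℝ) ^ (-(1 / ε)) :=
        Real.mul_rpow (by linarith) (Nat.cast_nonneg k)
      rw [hid, hsplit] at hmono
      exact hmono
end
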